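/- Bounding iteration numbers: for every sequence of channel actions σ over Σ and every word x, there exist natural numbers ℓ and L with ℓ ≤ L ≤ |x|·(|rea(σ)|+1) such that pr[σ^ℓ](x) ⊑ pr[σ^{L+1}](x). In particular, the iteration number L(σ,x) — the least L ∈ ℕ for which some ℓ ≤ L satisfies pr[σ^ℓ](x) ⊑ pr[σ^{L+1}](x) — satisfies L(σ,x) ≤ |x|·(|rea(σ)|+1). -/
import Mathlib


open List
/-- `wpow u k` is the word `u` concatenated `k` times. -/
def wpow {β : Type*} (u : List β) (k : ℕ) : List β := (List.replicate k u).flatten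

/-- Auxiliary residual operation, working on reversed words. -/
def resAux {α : Type*} [DecidableEq α] : List α → List α → List α
  | xr, [] => xr
  | [], _ :: _ => []
  | a :: xr, b :: vr => if a = b then resAux xr vr else resAux (a :: xr) vr
termination_by xr vr => vr.length

/-- The residual `x / v`: the prefix of `x` obtained by removing from `x`
its longest suffix that is a subword of `v`. -/
def res {α : Type*} [DecidableEq α] (x v : List α) : List α :=
  (resAux x.reverse v.reverse).reverse

inductive Act (α : Type*) where
  | write : List α → Act α
  | read : List α → Act α

/-- written part -/
def wri {α : Type*} : List (Act α) → List α
  | [] => []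
  | Act.write w :: σ => w ++ wri σ
  | Act.read _ :: σ => wri σ

/-- read part -/
def rea {α : Type*} : List (Act α) → List α
  | [] => []
  | Act.write _ :: σ => rea σ
  | Act.read w :: σ => w ++ rea σ

/-- `pr σ x` : minimal `σ`-predecessor of `x` (processing `σ` right-to-left). -/
def pr {α : Type*} [DecidableEq α] : List (Act α) → List α → List α
  | [], x => x
  | Act.write v :: σ, x => res (pr σ x) v
  | Act.read u :: σ, x => u ++ pr σ x

/-- lossy step for a single channel action -/
def stepAct {α : Type*} : Act α → List α → List α → Prop
  | Act.write w, x, y => y <+ x ++ w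
  | Act.read w, x, y => w ++ y <+ x

/-- lossy steps along a sequence of channel actions -/
def steps {α : Type*} : List (Act α) → List α → List α → Prop
  | [], x, y => x = y
  | θ :: σ, x, y => ∃ z, stepAct θ x z ∧ steps σ z y

/-- `w` is a fractional power of `u` -/
def FracPow {α : Type*} (u w : List α) : Prop := ∃ k : ℕ, w <+: wpow u k

/-- `x ⊖ u` : remainder of `x` after reading the leftmost embedding of `u`. -/
def ominus {α : Type*} [DecidableEq α] : List α → List α → List α
  | x, [] => x
  | [], _ :: _ => []
  | a :: x, b :: u => if a = b then ominus x u else ominus x (b :: u)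

/-- `σ` is increasing -/
def Increasing {α : Type*} (σ : List (Act α)) : Prop :=
  0 < (wri σ).length ∧
    wpow (rea σ) (wri σ).length <+ wpow (wri σ) ((wri σ).length - 1)

/- ### Auxiliary lemmas -/

lemma resAux_suffix {α : Type*} [DecidableEq α] : ∀ (xr vr : List α), resAux xr vr <:+ xr
  | _, [] => by rw [resAux]
  | [], _ :: _ => by rw [resAux]
  | a :: xr, b :: vr => by
    rw [resAux]
    split
    · exact (resAux_suffix xr vr).trans (suffix_cons a xr)
    · exact resAux_suffix (a :: xr) vr
termination_by xr vr => vr.length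

lemma res_prefix {α : Type*} [DecidableEq α] (x v : List α) : res x v <+: x := by
  have h : (resAux x.reverse v.reverse).reverse <+: x.reverse.reverse :=
    List.reverse_prefix.mpr (resAux_suffix x.reverse v.reverse)
  simpa [res] using h

lemma pr_append {α : Type*} [DecidableEq α] (σ₁ σ₂ : List (Act α)) (x : List α) :
    pr (σ₁ ++ σ₂) x = pr σ₁ (pr σ₂ x) := by
  induction σ₁ with
  | nil => rfl
  | cons a σ ih => cases a <;> simp [pr, ih]

lemma isPrefix_append_left {α : Type*} {l₁ l₂ : List α} (u : List α) (h : l₁ <+: l₂) :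
    u ++ l₁ <+: u ++ l₂ := by
  obtain ⟨t, ht⟩ := h
  exact ⟨t, by rw [List.append_assoc, ht]⟩

lemma pr_prefix {α : Type*} [DecidableEq α] (σ : List (Act α)) (y : List α) :
    pr σ y <+: rea σ ++ y := by
  induction σ with
  | nil => simp [pr, rea]
  | cons a σ ih =>
    cases a with
    | write v => exact (res_prefix (pr σ y) v).trans ih
    | read u =>
      have := isPrefix_append_left u ih
      simpa [pr, rea, List.append_assoc] using this

lemma wpow_succ {β : Type*} (u : List β) (k : ℕ) : wpow u (k + 1) = u ++ wpow u k := by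
  simp [wpow, List.replicate_succ]

lemma wpow_succ' {β : Type*} (u : List β) (k : ℕ) : wpow u (k + 1) = wpow u k ++ u := by
  simp [wpow, List.replicate_succ']

lemma wpow_zero {β : Type*} (u : List β) : wpow u 0 = [] := rfl

lemma wpow_length {β : Type*} (u : List β) (k : ℕ) : (wpow u k).length = k * u.length := by
  induction k with
  | zero => simp [wpow_zero]
  | succ k ih => rw [wpow_succ, List.length_append, ih]; ring

lemma wpow_prefix_succ {β : Type*} (u : List β) (k : ℕ) : wpow u k <+: wpow u (k + 1) := by
  rw [wpow_succ']; exact prefix_append _ _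

lemma pr_wpow_succ {α : Type*} [DecidableEq α] (σ : List (Act α)) (x : List α) (k : ℕ) :
    pr (wpow σ (k + 1)) x = pr σ (pr (wpow σ k) x) := by
  rw [wpow_succ, pr_append]

lemma pr_wpow_prefix {α : Type*} [DecidableEq α] (σ : List (Act α)) (x : List α) (k : ℕ) :
    pr (wpow σ k) x <+: wpow (rea σ) k ++ x := by
  induction k with
  | zero => simp [wpow_zero, pr]
  | succ k ih =>
    rw [pr_wpow_succ, wpow_succ, List.append_assoc]
    exact (pr_prefix σ _).trans (isPrefix_append_left _ ih)

/-- Main combinatorial lemma: a step `k ≤ |x|·(|rea σ|+1)` with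
`pr σ^k x ⊑ pr σ^{k+1} x` exists. -/
lemma exists_increasing_step {α : Type*} [DecidableEq α] (σ : List (Act α)) (x : List α) :
    ∃ k ≤ x.length * ((rea σ).length + 1),
      pr (wpow σ k) x <+ pr (wpow σ (k + 1)) x := by
  by_contra hc
  push_neg at hc
  set R := (rea σ).length with hR
  set B := x.length * (R + 1) with hB
  have hBe : B = x.length * R + x.length := by rw [hB, Nat.mul_succ]
  -- Step 1: strict length loss at each step
  have h1 : ∀ k ≤ B, (pr (wpow σ (k + 1)) x).length + 1 ≤ (pr (wpow σ k) x).length + R := by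
    intro k hk
    have hp : pr (wpow σ (k + 1)) x <+: rea σ ++ pr (wpow σ k) x := by
      rw [pr_wpow_succ]; exact pr_prefix σ _
    have hlen := hp.length_le
    rw [List.length_append, ← hR] at hlen
    rcases Nat.lt_or_ge (pr (wpow σ (k + 1)) x).length (R + (pr (wpow σ k) x).length)
      with h | h
    · omega
    · exfalso
      have heq : pr (wpow σ (k + 1)) x = rea σ ++ pr (wpow σ k) x :=
        hp.sublist.eq_of_length (by rw [List.length_append, ← hR]; omega)
      refine hc k hk ?_
      rw [heq]
      exact List.sublist_append_right (rea σ) _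
  -- Step 2: length bound
  have h2 : ∀ k ≤ B + 1, (pr (wpow σ k) x).length + k ≤ x.length + k * R := by
    intro k hk
    induction k with
    | zero => simp [wpow_zero, pr]
    | succ k ih =>
      have := h1 k (by omega)
      have := ih (by omega)
      calc (pr (wpow σ (k + 1)) x).length + (k + 1) ≤ x.length + k * R + R := by omega
        _ = x.length + (k + 1) * R := by ring
  -- Step 3: purity
  have h3 : ∀ k, x.length ≤ k → k ≤ B + 1 → pr (wpow σ k) x <+: wpow (rea σ) k := by
    intro k hxk hk
    have hlen : (pr (wpow σ k) x).length ≤ k * R := by have := h2 k hk; omega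
    exact List.prefix_of_prefix_length_le (pr_wpow_prefix σ x k) (prefix_append _ _)
      (by rw [wpow_length, ← hR]; omega)
  -- Step 4: strict decrease in pure regime
  have h4 : ∀ k, x.length ≤ k → k ≤ B →
      (pr (wpow σ (k + 1)) x).length + 1 ≤ (pr (wpow σ k) x).length := by
    intro k hxk hk
    by_contra h
    push_neg at h
    have hk1 : pr (wpow σ k) x <+: wpow (rea σ) (k + 1) :=
      (h3 k hxk (by omega)).trans (wpow_prefix_succ _ k)
    have hk2 : pr (wpow σ (k + 1)) x <+: wpow (rea σ) (k + 1) :=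
      h3 (k + 1) (by omega) (by omega)
    exact hc k hk (List.prefix_of_prefix_length_le hk1 hk2 (by omega)).sublist
  -- Step 5: iterate the strict decrease
  have h5 : ∀ j, x.length + j ≤ B + 1 →
      (pr (wpow σ (x.length + j)) x).length + j ≤ (pr (wpow σ x.length) x).length := by
    intro j
    induction j with
    | zero => intro _; simp
    | succ j ih =>
      intro hj
      have hstep := h4 (x.length + j) (by omega) (by omega)
      have := ih (by omega)
      have hrw : x.length + (j + 1) = (x.length + j) + 1 := by omega
      rw [hrw]
      omega
  have hfin := h5 (x.length * R + 1) (by omega)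
  have hxlen : (pr (wpow σ x.length) x).length ≤ x.length * R := by
    have := h2 x.length (by omega)
    omega
  omega

/-- bounding iteration numbers: there are `ℓ ≤ L ≤ |x|·(|rea σ|+1)`
with `pr[σ^ℓ](x) ⊑ pr[σ^{L+1}](x)`; in particular the iteration number
`L(σ,x)` is at most `|x|·(|rea σ|+1)`. -/
theorem iteration_number_bound {α : Type*} [DecidableEq α]
    (σ : List (Act α)) (x : List α) :
    (∃ ℓ L : ℕ, ℓ ≤ L ∧ L ≤ x.length * ((rea σ).length + 1) ∧
      pr (wpow σ ℓ) x <+ pr (wpow σ (L + 1)) x) ∧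
    sInf {L : ℕ | ∃ ℓ ≤ L, pr (wpow σ ℓ) x <+ pr (wpow σ (L + 1)) x} ≤
      x.length * ((rea σ).length + 1) := by
  obtain ⟨k, hk, hsub⟩ := exists_increasing_step σ x
  exact ⟨⟨k, k, le_rfl, hk, hsub⟩,
    le_trans (Nat.sInf_le ⟨k, le_rfl, hsub⟩) hk⟩
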